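/- arXiv:1302.1974 — 2 statements merged into one kernel-verified Lean document; each statement's English description precedes it below -/
import Mathlib

section
/- (Paper's Lemma 3.) Let ε ≥ 0, c ≥ 0 and δ ∈ ℝ. Let K₀ := {y ∈ ℝ^M : 𝐀y = e, 𝐂y ≤ d}, let y* ∈ K₀ satisfy ½(y*)ᵀHy* ≤ ½yᵀHy for all y ∈ K₀, and let ŷ ∈ K₀. If λ ∈ ℝ^p and μ ∈ ℝ^q with μ ≥ 0 satisfy D^δ(λ,μ) ≥ ½ŷᵀHŷ − ε·c, then ½(ŷ − y*)ᵀH(ŷ − y*) ≤ ε·c + δ·μᵀd. -/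
open Matrix

/-- The dual function of the tightened quadratic program
`min {½yᵀHy : 𝐀y = e, 𝐂y ≤ (1−δ)d}`. -/
noncomputable def dualFn {M p q : ℕ} (H : Matrix (Fin M) (Fin M) ℝ)
    (A : Matrix (Fin p) (Fin M) ℝ) (C : Matrix (Fin q) (Fin M) ℝ)
    (e : Fin p → ℝ) (d : Fin q → ℝ) (δ : ℝ)
    (lam : Fin p → ℝ) (mu : Fin q → ℝ) : ℝ :=
  -(1/2) * ((Aᵀ *ᵥ lam + Cᵀ *ᵥ mu) ⬝ᵥ H⁻¹ *ᵥ (Aᵀ *ᵥ lam + Cᵀ *ᵥ mu))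
    - lam ⬝ᵥ e - (1 - δ) * (mu ⬝ᵥ d)

/-- Paper's Lemma 3: if `y*` minimizes `½yᵀHy` over the untightened feasible set
`K₀ = {y : 𝐀y = e, 𝐂y ≤ d}`, `ŷ ∈ K₀`, and the dual value satisfies
`D^δ(λ,μ) ≥ ½ŷᵀHŷ − ε·c` for some `μ ≥ 0`, then
`½(ŷ − y*)ᵀH(ŷ − y*) ≤ ε·c + δ·μᵀd`. -/
theorem near_optimal_variable_bound {M p q : ℕ}
    (hM : 1 ≤ M) (hp : 1 ≤ p) (hq : 1 ≤ q)
    (H : Matrix (Fin M) (Fin M) ℝ) (hH : H.PosDef)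
    (A : Matrix (Fin p) (Fin M) ℝ) (C : Matrix (Fin q) (Fin M) ℝ)
    (e : Fin p → ℝ) (d : Fin q → ℝ) (δ : ℝ)
    (ε c : ℝ) (hε : 0 ≤ ε) (hc : 0 ≤ c)
    (ystar : Fin M → ℝ)
    (hystar : A *ᵥ ystar = e ∧ C *ᵥ ystar ≤ d)
    (hmin : ∀ y : Fin M → ℝ, A *ᵥ y = e → C *ᵥ y ≤ d →
      (1/2) * (ystar ⬝ᵥ H *ᵥ ystar) ≤ (1/2) * (y ⬝ᵥ H *ᵥ y))
    (yhat : Fin M → ℝ) (hyhat : A *ᵥ yhat = e ∧ C *ᵥ yhat ≤ d)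
    (lam : Fin p → ℝ) (mu : Fin q → ℝ) (hmu : 0 ≤ mu)
    (hdual : dualFn H A C e d δ lam mu ≥ (1/2) * (yhat ⬝ᵥ H *ᵥ yhat) - ε * c) :
    (1/2) * ((yhat - ystar) ⬝ᵥ H *ᵥ (yhat - ystar)) ≤ ε * c + δ * (mu ⬝ᵥ d) := by
  obtain ⟨hA1, hC1⟩ := hystar
  obtain ⟨hA2, hC2⟩ := hyhat
  -- basic facts about H
  have hquad : ∀ x : Fin M → ℝ, 0 ≤ x ⬝ᵥ H *ᵥ x := fun x => by
    have := hH.posSemidef.dotProduct_mulVec_nonneg x; simpa using this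
  have hHt : Hᵀ = H := by have := hH.1; simpa [Matrix.IsHermitian] using this
  have hsym : ∀ x y : Fin M → ℝ, x ⬝ᵥ H *ᵥ y = y ⬝ᵥ H *ᵥ x := by
    intro x y
    rw [dotProduct_mulVec, ← vecMul_transpose, hHt, dotProduct_comm]
  -- the dual vector g and w = H⁻¹ g
  set g : Fin M → ℝ := Aᵀ *ᵥ lam + Cᵀ *ᵥ mu with hg
  set w : Fin M → ℝ := H⁻¹ *ᵥ g with hw
  have hHw : H *ᵥ w = g := by
    rw [hw, mulVec_mulVec, Matrix.mul_nonsing_inv H hH.det_pos.ne'.isUnit, one_mulVec]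
  have hgw : g ⬝ᵥ H⁻¹ *ᵥ g = g ⬝ᵥ w := rfl
  have hexpand : ∀ x : Fin M → ℝ,
      (x + w) ⬝ᵥ H *ᵥ (x + w) = x ⬝ᵥ H *ᵥ x + 2 * (g ⬝ᵥ x) + g ⬝ᵥ w := by
    intro x
    rw [mulVec_add, dotProduct_add, add_dotProduct, add_dotProduct]
    rw [hsym w x, hHw, dotProduct_comm x g, dotProduct_comm w g]
    ring
  have hgdot : ∀ y : Fin M → ℝ, g ⬝ᵥ y = lam ⬝ᵥ (A *ᵥ y) + mu ⬝ᵥ (C *ᵥ y) := by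
    intro y
    rw [hg, add_dotProduct, mulVec_transpose, mulVec_transpose,
      ← dotProduct_mulVec, ← dotProduct_mulVec]
  -- weak duality against any feasible point
  have hweak : ∀ y : Fin M → ℝ, A *ᵥ y = e → C *ᵥ y ≤ d →
      dualFn H A C e d δ lam mu ≤ (1/2) * (y ⬝ᵥ H *ᵥ y) + δ * (mu ⬝ᵥ d) := by
    intro y hAy hCy
    have h1 : 0 ≤ (y + w) ⬝ᵥ H *ᵥ (y + w) := hquad _
    have h2 := hexpand y
    have h3 : mu ⬝ᵥ (C *ᵥ y) ≤ mu ⬝ᵥ d := by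
      unfold dotProduct
      exact Finset.sum_le_sum fun i _ => mul_le_mul_of_nonneg_left (hCy i) (hmu i)
    have h4 := hgdot y
    rw [hAy] at h4
    unfold dualFn
    rw [← hg, hgw]
    linarith
  -- first-order optimality at ystar
  set v : Fin M → ℝ := yhat - ystar with hv
  set s : ℝ := ystar ⬝ᵥ H *ᵥ v with hs
  set r : ℝ := v ⬝ᵥ H *ᵥ v with hr
  have hr0 : 0 ≤ r := hquad v
  have hkey : ∀ t : ℝ, 0 < t → t ≤ 1 → 0 ≤ s + t * r / 2 := by
    intro t ht ht1
    have hfA : A *ᵥ (ystar + t • v) = e := by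
      rw [mulVec_add, mulVec_smul, hv, mulVec_sub, hA1, hA2]
      simp
    have hfC : C *ᵥ (ystar + t • v) ≤ d := by
      intro i
      have h1 := hC1 i
      have h2 := hC2 i
      have : (C *ᵥ (ystar + t • v)) i
          = (C *ᵥ ystar) i + t * ((C *ᵥ yhat) i - (C *ᵥ ystar) i) := by
        rw [mulVec_add, mulVec_smul, hv, mulVec_sub]
        simp [mul_sub]
      rw [this]
      nlinarith
    have hm := hmin _ hfA hfC
    have hq : (ystar + t • v) ⬝ᵥ H *ᵥ (ystar + t • v)
        = ystar ⬝ᵥ H *ᵥ ystar + 2 * t * s + t ^ 2 * r := by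
      rw [mulVec_add, dotProduct_add, add_dotProduct, add_dotProduct,
        mulVec_smul, dotProduct_smul, smul_dotProduct, smul_dotProduct,
        dotProduct_smul, hsym v ystar]
      simp only [smul_eq_mul, hs, hr]
      ring
    rw [hq] at hm
    nlinarith
  have hfoc : 0 ≤ s := by
    by_contra hcon
    push_neg at hcon
    rcases eq_or_lt_of_le hr0 with hre | hrp
    · have := hkey 1 one_pos le_rfl
      rw [← hre] at this
      linarith
    · have htpos : 0 < min 1 (-s / r) :=
        lt_min one_pos (div_pos (by linarith) hrp)
      have hk := hkey _ htpos (min_le_left _ _)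
      have hle : min 1 (-s / r) ≤ -s / r := min_le_right _ _
      have h5 : min 1 (-s / r) * r ≤ -s / r * r := mul_le_mul_of_nonneg_right hle hr0
      have h6 : -s / r * r = -s := div_mul_cancel₀ _ hrp.ne'
      linarith
  -- combine
  have hw1 := hweak ystar hA1 hC1
  have hexp2 : yhat ⬝ᵥ H *ᵥ yhat = ystar ⬝ᵥ H *ᵥ ystar + 2 * s + r := by
    have hy : yhat = ystar + v := by rw [hv]; ring
    rw [hy, mulVec_add, dotProduct_add, add_dotProduct, add_dotProduct,
      hsym v ystar]
    simp only [hs, hr]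
    ring
  linarith
end

section
/- (Bound on dual variables under a Slater-type condition; extension of Nedić–Ozdaglar used in the proof of the paper's Theorem 1.) Suppose d ≥ 0, let δ̄ ∈ (0,1] and 0 ≤ δ ≤ δ̄/2, and suppose there exists ȳ ∈ ℝ^M with 𝐀ȳ = e and 𝐂ȳ ≤ (1−δ̄)d. Then for every λ ∈ ℝ^p and every μ ∈ ℝ^q with μ ≥ 0, D^δ(λ,μ) ≤ ½ȳᵀHȳ − (δ̄/2)·μᵀd; equivalently, μᵀd ≤ (2/δ̄)·(½ȳᵀHȳ − D^δ(λ,μ)). -/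
open Matrix

/-- Bound on dual variables under a Slater-type condition: if `d ≥ 0`,
`δ̄ ∈ (0,1]`, `0 ≤ δ ≤ δ̄/2` and `ȳ` satisfies `𝐀ȳ = e` and `𝐂ȳ ≤ (1−δ̄)d`, then
for all `λ` and all `μ ≥ 0`, `D^δ(λ,μ) ≤ ½ȳᵀHȳ − (δ̄/2)·μᵀd`; equivalently,
`μᵀd ≤ (2/δ̄)(½ȳᵀHȳ − D^δ(λ,μ))`. -/
theorem dual_variable_bound_slater {M p q : ℕ}
    (hM : 1 ≤ M) (hp : 1 ≤ p) (hq : 1 ≤ q)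
    (H : Matrix (Fin M) (Fin M) ℝ) (hH : H.PosDef)
    (A : Matrix (Fin p) (Fin M) ℝ) (C : Matrix (Fin q) (Fin M) ℝ)
    (e : Fin p → ℝ) (d : Fin q → ℝ) (hd : 0 ≤ d)
    (δbar δ : ℝ) (hδbar : 0 < δbar ∧ δbar ≤ 1) (hδ0 : 0 ≤ δ) (hδ : δ ≤ δbar / 2)
    (ybar : Fin M → ℝ) (heq : A *ᵥ ybar = e) (hineq : C *ᵥ ybar ≤ (1 - δbar) • d) :
    ∀ (lam : Fin p → ℝ) (mu : Fin q → ℝ), 0 ≤ mu →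
      dualFn H A C e d δ lam mu ≤ (1/2) * (ybar ⬝ᵥ H *ᵥ ybar) - (δbar / 2) * (mu ⬝ᵥ d) ∧
      mu ⬝ᵥ d ≤ (2 / δbar) * ((1/2) * (ybar ⬝ᵥ H *ᵥ ybar) - dualFn H A C e d δ lam mu) := by
  obtain ⟨hδb0, hδb1⟩ := hδbar
  intro lam mu hmu
  have hdetH : IsUnit H.det := isUnit_iff_ne_zero.mpr (ne_of_gt hH.det_pos)
  have hHinv : H * H⁻¹ = 1 := Matrix.mul_nonsing_inv H hdetH
  have hHsym : Hᵀ = H := by simpa using hH.1.eq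
  have hHinvsym : (H⁻¹)ᵀ = H⁻¹ := by
    rw [Matrix.transpose_nonsing_inv, hHsym]
  set z : Fin M → ℝ := Aᵀ *ᵥ lam + Cᵀ *ᵥ mu with hz
  clear_value z
  have hHHinvz : H *ᵥ (H⁻¹ *ᵥ z) = z := by
    rw [Matrix.mulVec_mulVec, hHinv, Matrix.one_mulVec]
  set w : Fin M → ℝ := ybar + H⁻¹ *ᵥ z with hw
  have hpsd : 0 ≤ w ⬝ᵥ H *ᵥ w := by simpa using hH.posSemidef.dotProduct_mulVec_nonneg w
  clear_value w
  have hexpand : w ⬝ᵥ H *ᵥ w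
      = ybar ⬝ᵥ H *ᵥ ybar + 2 * (z ⬝ᵥ ybar) + z ⬝ᵥ H⁻¹ *ᵥ z := by
    have h1 : ybar ⬝ᵥ H *ᵥ (H⁻¹ *ᵥ z) = z ⬝ᵥ ybar := by
      rw [hHHinvz, dotProduct_comm]
    have h2 : (H⁻¹ *ᵥ z) ⬝ᵥ H *ᵥ ybar = z ⬝ᵥ ybar := by
      rw [Matrix.dotProduct_mulVec, ← Matrix.mulVec_transpose, hHsym, hHHinvz]
    have h3 : (H⁻¹ *ᵥ z) ⬝ᵥ H *ᵥ (H⁻¹ *ᵥ z) = z ⬝ᵥ H⁻¹ *ᵥ z := by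
      rw [hHHinvz, Matrix.dotProduct_mulVec, ← Matrix.mulVec_transpose, hHinvsym]
    rw [hw, Matrix.mulVec_add, add_dotProduct, dotProduct_add,
      dotProduct_add, h1, h2, h3]
    ring
  have hkey : -(1/2) * (z ⬝ᵥ H⁻¹ *ᵥ z) ≤ (1/2) * (ybar ⬝ᵥ H *ᵥ ybar) + z ⬝ᵥ ybar := by
    nlinarith [hpsd, hexpand]
  have hzy : z ⬝ᵥ ybar = lam ⬝ᵥ e + mu ⬝ᵥ (C *ᵥ ybar) := by
    rw [hz, add_dotProduct, Matrix.mulVec_transpose, Matrix.mulVec_transpose,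
      ← Matrix.dotProduct_mulVec, ← Matrix.dotProduct_mulVec, heq]
  have hmuC : mu ⬝ᵥ (C *ᵥ ybar) ≤ (1 - δbar) * (mu ⬝ᵥ d) := by
    have h : mu ⬝ᵥ (C *ᵥ ybar) ≤ mu ⬝ᵥ ((1 - δbar) • d) := by
      apply Finset.sum_le_sum
      intro i _
      exact mul_le_mul_of_nonneg_left (hineq i) (hmu i)
    calc mu ⬝ᵥ (C *ᵥ ybar) ≤ mu ⬝ᵥ ((1 - δbar) • d) := h
      _ = (1 - δbar) * (mu ⬝ᵥ d) := by
          simp [dotProduct, Finset.mul_sum]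
          exact Finset.sum_congr rfl fun i _ => by ring
  have hmud : 0 ≤ mu ⬝ᵥ d := Finset.sum_nonneg fun i _ => mul_nonneg (hmu i) (hd i)
  have hfirst : dualFn H A C e d δ lam mu
      ≤ (1/2) * (ybar ⬝ᵥ H *ᵥ ybar) - (δbar / 2) * (mu ⬝ᵥ d) := by
    have hD : dualFn H A C e d δ lam mu
        = -(1/2) * (z ⬝ᵥ H⁻¹ *ᵥ z) - lam ⬝ᵥ e - (1 - δ) * (mu ⬝ᵥ d) := by
      rw [dualFn, hz]
    rw [hD]
    nlinarith [hkey, hzy, hmuC, hmud]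
  refine ⟨hfirst, ?_⟩
  have h2 : (δbar / 2) * (mu ⬝ᵥ d)
      ≤ (1/2) * (ybar ⬝ᵥ H *ᵥ ybar) - dualFn H A C e d δ lam mu := by linarith
  calc mu ⬝ᵥ d = (2 / δbar) * ((δbar / 2) * (mu ⬝ᵥ d)) := by
        field_simp
    _ ≤ (2 / δbar) * ((1/2) * (ybar ⬝ᵥ H *ᵥ ybar) - dualFn H A C e d δ lam mu) := by
        apply mul_le_mul_of_nonneg_left h2 (by positivity)
end
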